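/- Let $A$ be a $q \times q$ matrix of real analytic functions on a polydisc in $\mathbb{C}^n$, and suppose $f_1, \ldots, f_q$ are sections with $\bar\partial_{p+1} f_i = \sum_j A_{ij} f_j$ where each $f_i$ is holomorphic in $z_1, \ldots, z_p$ (i.e., independent of $\bar z_1, \ldots, \bar z_p$). Then the matrix $A'$ obtained from $A$ by setting $\bar z_1 = \cdots = \bar z_p = 0$ in its power series expansion is real analytic, holomorphic in $z_1, \ldots, z_p$, and still satisfies $\bar\partial_{p+1} f_i = \sum_j A'_{ij} f_j$ on a possibly smaller polydisc. -/

import Mathlib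

open Complex

/-- The Wirtinger derivative `∂f/∂z̄ⱼ` of a function on `ℂⁿ`. -/
noncomputable def dbarj {n : ℕ} (j : Fin n) (f : (Fin n → ℂ) → ℂ)
    (x : Fin n → ℂ) : ℂ :=
  (fderiv ℝ f x (Pi.single j 1) +
    Complex.I * fderiv ℝ f x (Complex.I • (Pi.single j 1 : Fin n → ℂ))) / 2

/-- The open polydisc of polyradius `η` in `ℂⁿ`. -/
def polydisc (n : ℕ) (η : ℝ) : Set (Fin n → ℂ) := {z | ∀ j, ‖z j‖ < η}

open ComplexConjugate Filter Metric
open scoped NNReal ENNReal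

noncomputable section AuxStmt15

variable {n : ℕ}

abbrev CE (n : ℕ) := Fin n → ℂ
abbrev CD (n : ℕ) := CE n × CE n

/-- Coordinatewise complex conjugation as a real-linear map. -/
def conjPi (n : ℕ) : CE n →L[ℝ] CE n :=
  ContinuousLinearMap.pi fun j =>
    Complex.conjCLE.toContinuousLinearMap.comp (ContinuousLinearMap.proj j)

@[simp] lemma conjPi_apply (z : CE n) (j : Fin n) : conjPi n z j = conj (z j) := by
  simp [conjPi]

lemma norm_conj' (w : ℂ) : ‖conj w‖ = ‖w‖ := by
  rw [starRingEnd_apply, norm_star]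

@[simp] lemma conjPi_conjPi (z : CE n) : conjPi n (conjPi n z) = z := by
  ext j; simp

lemma norm_conjPi (z : CE n) : ‖conjPi n z‖ = ‖z‖ := by
  apply le_antisymm
  · refine (pi_norm_le_iff_of_nonneg (norm_nonneg z)).2 fun j => ?_
    rw [conjPi_apply, norm_conj']
    exact norm_le_pi_norm z j
  · refine (pi_norm_le_iff_of_nonneg (norm_nonneg _)).2 fun j => ?_
    have := norm_le_pi_norm (conjPi n z) j
    rwa [conjPi_apply, norm_conj'] at this

/-- `z ↦ (z, z̄)`. -/
def Jmap (n : ℕ) : CE n →L[ℝ] CD n :=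
  (ContinuousLinearMap.id ℝ (CE n)).prod (conjPi n)

@[simp] lemma Jmap_apply (z : CE n) : Jmap n z = (z, conjPi n z) := rfl

lemma norm_Jmap (z : CE n) : ‖Jmap n z‖ = ‖z‖ := by
  simp [Jmap, Prod.norm_def, norm_conjPi]

/-- Projection killing the first `p` coordinates. -/
def Pmap (n p : ℕ) : CE n →L[ℂ] CE n :=
  ContinuousLinearMap.pi fun j =>
    if (j : ℕ) < p then 0 else ContinuousLinearMap.proj j

lemma Pmap_apply (p : ℕ) (w : CE n) (j : Fin n) :
    Pmap n p w j = if (j : ℕ) < p then 0 else w j := by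
  simp only [Pmap, ContinuousLinearMap.pi_apply]
  split <;> simp

lemma norm_Pmap_le (p : ℕ) (w : CE n) : ‖Pmap n p w‖ ≤ ‖w‖ := by
  refine (pi_norm_le_iff_of_nonneg (norm_nonneg w)).2 fun j => ?_
  rw [Pmap_apply]
  split
  · simp
  · exact norm_le_pi_norm w j

lemma Pmap_Pmap (p : ℕ) (w : CE n) : Pmap n p (Pmap n p w) = Pmap n p w := by
  ext j; simp only [Pmap_apply]; split <;> simp

/-- `(z,w) ↦ (z + w̄)/2`. -/
def Amap (n : ℕ) : CD n →L[ℝ] CE n :=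
  (2⁻¹ : ℝ) • (ContinuousLinearMap.fst ℝ (CE n) (CE n) +
    (conjPi n).comp (ContinuousLinearMap.snd ℝ (CE n) (CE n)))

/-- `(z,w) ↦ (z - w̄)/(2i)`. -/
def Bmap (n : ℕ) : CD n →L[ℝ] CE n :=
  (-(I/2)) • (ContinuousLinearMap.fst ℝ (CE n) (CE n) -
    (conjPi n).comp (ContinuousLinearMap.snd ℝ (CE n) (CE n)))

lemma Amap_apply (v : CD n) (j : Fin n) :
    Amap n v j = (v.1 j + conj (v.2 j)) / 2 := by
  simp [Amap, Complex.real_smul]; ring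

lemma Bmap_apply (v : CD n) (j : Fin n) :
    Bmap n v j = -(I/2) * (v.1 j - conj (v.2 j)) := by
  simp [Bmap]

lemma Amap_J (z : CE n) : Amap n (Jmap n z) = z := by
  ext j; rw [Amap_apply]; simp

lemma Bmap_J (z : CE n) : Bmap n (Jmap n z) = 0 := by
  ext j; rw [Bmap_apply]; simp

lemma Amap_J' (z : CE n) : Amap n (z, conjPi n z) = z := Amap_J z

lemma Bmap_J' (z : CE n) : Bmap n (z, conjPi n z) = 0 := Bmap_J z

lemma Amap_smulI (v : CD n) : Amap n (I • v) = -(Bmap n v) := by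
  ext j
  rw [Pi.neg_apply, Amap_apply, Bmap_apply]
  have h1 : (I • v).1 j = I * v.1 j := rfl
  have h2 : (I • v).2 j = I * v.2 j := rfl
  rw [h1, h2, map_mul]
  simp only [Complex.conj_I]
  ring_nf

lemma Bmap_smulI (v : CD n) : Bmap n (I • v) = Amap n v := by
  ext j
  rw [Amap_apply, Bmap_apply]
  have h1 : (I • v).1 j = I * v.1 j := rfl
  have h2 : (I • v).2 j = I * v.2 j := rfl
  rw [h1, h2, map_mul]
  simp only [Complex.conj_I]
  ring_nf
  simp only [Complex.I_sq]
  ring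

lemma norm_Amap_le (v : CD n) : ‖Amap n v‖ ≤ ‖v‖ := by
  refine (pi_norm_le_iff_of_nonneg (norm_nonneg v)).2 fun j => ?_
  rw [Amap_apply]
  calc ‖(v.1 j + conj (v.2 j)) / 2‖ ≤ (‖v.1 j‖ + ‖v.2 j‖)/2 := by
        rw [norm_div]
        simp only [Complex.norm_ofNat]
        gcongr
        exact (norm_add_le _ _).trans (by simp)
    _ ≤ (‖v‖ + ‖v‖)/2 := by
        gcongr
        · exact (norm_le_pi_norm v.1 j).trans (norm_fst_le v)
        · exact (norm_le_pi_norm v.2 j).trans (norm_snd_le v)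
    _ = ‖v‖ := by ring

lemma norm_Bmap_le (v : CD n) : ‖Bmap n v‖ ≤ ‖v‖ := by
  refine (pi_norm_le_iff_of_nonneg (norm_nonneg v)).2 fun j => ?_
  rw [Bmap_apply]
  have : ‖-(I/2) * (v.1 j - conj (v.2 j))‖ = ‖v.1 j - conj (v.2 j)‖ / 2 := by
    rw [norm_mul, norm_neg, norm_div]
    simp [Complex.norm_I]
    ring
  rw [this]
  calc ‖v.1 j - conj (v.2 j)‖ / 2 ≤ (‖v.1 j‖ + ‖v.2 j‖)/2 := by
        gcongr
        exact (norm_sub_le _ _).trans (by simp)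
    _ ≤ (‖v‖ + ‖v‖)/2 := by
        gcongr
        · exact (norm_le_pi_norm v.1 j).trans (norm_fst_le v)
        · exact (norm_le_pi_norm v.2 j).trans (norm_snd_le v)
    _ = ‖v‖ := by ring

lemma decompD (v : CD n) : Jmap n (Amap n v) + I • Jmap n (Bmap n v) = v := by
  have h1 : (I • Jmap n (Bmap n v)) = (I • Bmap n v, I • conjPi n (Bmap n v)) := rfl
  refine Prod.ext ?_ ?_
  · show Amap n v + (I • Jmap n (Bmap n v)).1 = v.1
    rw [h1]
    ext j
    simp only [Pi.add_apply, Pi.smul_apply, smul_eq_mul]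
    rw [Amap_apply, Bmap_apply]
    ring_nf
    rw [Complex.I_sq]
    ring
  · show conjPi n (Amap n v) + (I • Jmap n (Bmap n v)).2 = v.2
    rw [h1]
    ext j
    simp only [Pi.add_apply, Pi.smul_apply, smul_eq_mul, conjPi_apply]
    rw [Amap_apply, Bmap_apply]
    simp only [map_div₀, map_add, map_mul, map_sub, map_neg, Complex.conj_conj, Complex.conj_I,
      map_ofNat]
    ring_nf
    rw [Complex.I_sq]
    ring
section Series

variable {n : ℕ} (P : FormalMultilinearSeries ℝ (CE n) ℂ)

def coefE {k : ℕ} (ε : Fin k → Bool) : ℂ := ∏ l, if ε l then I else 1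

def LmapE (n : ℕ) {k : ℕ} (ε : Fin k → Bool) : Fin k → (CD n →L[ℝ] CE n) :=
  fun l => if ε l then Bmap n else Amap n

def Nmap (k : ℕ) : ContinuousMultilinearMap ℝ (fun _ : Fin k => CD n) ℂ :=
  ∑ ε : Fin k → Bool, coefE ε • (P k).compContinuousLinearMap (LmapE n ε)

lemma Nmap_apply (k : ℕ) (m : Fin k → CD n) :
    Nmap P k m = ∑ ε : Fin k → Bool, coefE ε • (P k) (fun l => LmapE n ε l (m l)) := by
  simp [Nmap, ContinuousMultilinearMap.sum_apply, ContinuousMultilinearMap.smul_apply,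
    ContinuousMultilinearMap.compContinuousLinearMap_apply]

lemma coefE_norm {k : ℕ} (ε : Fin k → Bool) : ‖coefE ε‖ = 1 := by
  unfold coefE
  rw [norm_prod]
  rw [Finset.prod_eq_one]
  intro l _
  by_cases h : ε l <;> simp [h]

/-- flip one coordinate -/
def flipE {k : ℕ} (l : Fin k) : (Fin k → Bool) ≃ (Fin k → Bool) :=
  Function.Involutive.toPerm (fun ε => Function.update ε l (!ε l)) (by
    intro ε; funext i
    by_cases h : i = l
    · subst h; simp
    · simp [Function.update_of_ne h])

lemma flipE_apply {k : ℕ} (l : Fin k) (ε : Fin k → Bool) :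
    flipE l ε = Function.update ε l (!ε l) := rfl

lemma coefE_update {k : ℕ} (ε : Fin k → Bool) (l : Fin k) (b : Bool) :
    coefE (Function.update ε l b) =
      (if b then I else 1) * ∏ i ∈ Finset.univ \ {l}, (if ε i then I else (1:ℂ)) := by
  unfold coefE
  have h : ∀ i : Fin k, (if Function.update ε l b i then I else (1:ℂ)) =
      Function.update (fun i => if ε i then I else (1:ℂ)) l (if b then I else 1) i := by
    intro i
    by_cases hi : i = l
    · subst hi; simp
    · simp [Function.update_of_ne hi]
  rw [Finset.prod_congr rfl (fun i _ => h i)]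
  exact Finset.prod_update_of_mem (Finset.mem_univ l) _ _

lemma coefE_eq {k : ℕ} (ε : Fin k → Bool) (l : Fin k) :
    coefE ε = (if ε l then I else 1) * ∏ i ∈ Finset.univ \ {l}, (if ε i then I else (1:ℂ)) := by
  conv_lhs => rw [← Function.update_eq_self l ε]
  rw [coefE_update]

lemma Nmap_update_smulI (k : ℕ) (m : Fin k → CD n) (l : Fin k) (v : CD n) :
    Nmap P k (Function.update m l (I • v)) = I • Nmap P k (Function.update m l v) := by
  classical
  rw [Nmap_apply, Nmap_apply, Finset.smul_sum]
  refine Fintype.sum_equiv (flipE l) _ _ fun ε => ?_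
  have hb : ∀ (x : CD n) (ε' : Fin k → Bool),
      (fun i => LmapE n ε' i (Function.update m l x i)) =
        Function.update (fun i => LmapE n ε' i (m i)) l (LmapE n ε' l x) :=
    fun x ε' => funext fun j => Function.apply_update (fun i y => LmapE n ε' i y) m l x j
  rw [hb, hb]
  have hbase : Function.update (fun i => LmapE n (flipE l ε) i (m i)) l =
      Function.update (fun i => LmapE n ε i (m i)) l := by
    funext x j
    by_cases hj : j = l
    · subst hj; simp
    · simp only [Function.update_of_ne hj]
      simp [LmapE, flipE_apply, Function.update_of_ne hj]
  rw [flipE_apply] at hbase ⊢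
  by_cases hl : ε l
  · -- ε l = true
    have hL : LmapE n ε l = Bmap n := by simp [LmapE, hl]
    have hL' : LmapE n (Function.update ε l (!ε l)) l = Amap n := by
      simp [LmapE, hl]
    rw [coefE_eq ε l, coefE_update, hL, hL', hbase, hl, Bmap_smulI]
    simp [smul_smul, mul_assoc]
  · -- ε l = false
    have hlf : ε l = false := by simpa using hl
    have hL : LmapE n ε l = Amap n := by simp [LmapE, hlf]
    have hL' : LmapE n (Function.update ε l (!ε l)) l = Bmap n := by
      simp [LmapE, hlf]
    rw [coefE_eq ε l, coefE_update, hL, hL', hbase, hlf, Amap_smulI]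
    have hneg : (P k) (Function.update (fun i => LmapE n ε i (m i)) l (-(Bmap n v))) =
        - (P k) (Function.update (fun i => LmapE n ε i (m i)) l (Bmap n v)) :=
      (P k).toMultilinearMap.map_update_neg (fun i => LmapE n ε i (m i)) l (Bmap n v)
    rw [hneg]
    set R : ℂ := ∏ i ∈ Finset.univ \ {l}, (if ε i then I else (1:ℂ)) with hR
    set X : ℂ := (P k) (Function.update (fun i => LmapE n ε i (m i)) l (Bmap n v)) with hX
    simp only [if_false, Bool.not_false, if_true, Bool.false_eq_true, smul_neg, smul_smul,
      one_mul]
    rw [show I * (I * R) = -R by rw [← mul_assoc, Complex.I_mul_I]; ring]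
    simp

/-- the complexified series term -/
def Qk (k : ℕ) : ContinuousMultilinearMap ℂ (fun _ : Fin k => CD n) ℂ where
  toFun := Nmap P k
  map_update_add' := by
    intro inst m i x y
    convert (Nmap P k).map_update_add m i x y using 2
  map_update_smul' := by
    intro inst m i c x
    have hinst : inst = instDecidableEqFin k := Subsingleton.elim _ _
    subst hinst
    have hc : c • x = (c.re : ℝ) • x + c.im • (I • x) := by
      calc c • x = ((c.re : ℂ) + (c.im : ℂ) * I) • x := by rw [Complex.re_add_im]
        _ = (c.re : ℂ) • x + ((c.im : ℂ) * I) • x := add_smul _ _ _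
        _ = (c.re : ℝ) • x + c.im • (I • x) := by
            rw [Complex.coe_smul, mul_smul, Complex.coe_smul]
    have step : Nmap P k (Function.update m i (c • x)) =
        (c.re : ℝ) • Nmap P k (Function.update m i x) +
          c.im • (I • Nmap P k (Function.update m i x)) := by
      rw [hc]
      rw [(Nmap P k).map_update_add, (Nmap P k).map_update_smul, (Nmap P k).map_update_smul,
        Nmap_update_smulI]
    have goalEq : (c.re : ℝ) • Nmap P k (Function.update m i x) +
          c.im • (I • Nmap P k (Function.update m i x)) =
        c • Nmap P k (Function.update m i x) := by
      set Nv := Nmap P k (Function.update m i x)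
      calc (c.re : ℝ) • Nv + c.im • (I • Nv)
          = (c.re : ℂ) * Nv + (c.im : ℂ) * (I * Nv) := by
            rw [Complex.real_smul, Complex.real_smul, smul_eq_mul]
        _ = ((c.re : ℂ) + (c.im : ℂ) * I) * Nv := by ring
        _ = c * Nv := by rw [Complex.re_add_im]
        _ = c • Nv := by rw [smul_eq_mul]
    convert step.trans goalEq using 2
  cont := (Nmap P k).cont

lemma Qk_apply (k : ℕ) (m : Fin k → CD n) : Qk P k m = Nmap P k m := rfl

def Qser : FormalMultilinearSeries ℂ (CD n) ℂ := fun k => Qk P k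

lemma Qk_norm_le (k : ℕ) : ‖Qk P k‖ ≤ (2:ℝ)^k * ‖P k‖ := by
  apply ContinuousMultilinearMap.opNorm_le_bound (by positivity)
  intro m
  rw [Qk_apply, Nmap_apply]
  calc ‖∑ ε : Fin k → Bool, coefE ε • (P k) (fun l => LmapE n ε l (m l))‖
      ≤ ∑ ε : Fin k → Bool, ‖coefE ε • (P k) (fun l => LmapE n ε l (m l))‖ :=
        norm_sum_le _ _
    _ ≤ ∑ _ε : Fin k → Bool, ‖P k‖ * ∏ l, ‖m l‖ := by
        apply Finset.sum_le_sum
        intro ε _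
        rw [norm_smul, coefE_norm, one_mul]
        refine ((P k).le_opNorm _).trans ?_
        apply mul_le_mul_of_nonneg_left _ (norm_nonneg _)
        apply Finset.prod_le_prod (fun l _ => norm_nonneg _)
        intro l _
        by_cases hl : ε l
        · simp only [LmapE, hl, if_true]; exact norm_Bmap_le _
        · simp only [LmapE, hl, if_false]; exact norm_Amap_le _
    _ = ((2^k : ℕ) : ℝ) * (‖P k‖ * ∏ l, ‖m l‖) := by
        rw [Finset.sum_const, Finset.card_univ]
        have hcard : Fintype.card (Fin k → Bool) = 2^k := by
          rw [Fintype.card_fun]; simp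
        rw [hcard, nsmul_eq_mul]
    _ = (2:ℝ)^k * ‖P k‖ * ∏ l, ‖m l‖ := by push_cast; ring

lemma Qk_diagJ (k : ℕ) (z : CE n) :
    Qk P k (fun _ => Jmap n z) = P k (fun _ => z) := by
  rw [Qk_apply, Nmap_apply]
  rw [Finset.sum_eq_single (fun _ => false)]
  · simp [coefE, LmapE, Amap_J, Amap_J']
  · intro ε _ hne
    have : ∃ i, ε i = true := by
      by_contra hcon
      push_neg at hcon
      apply hne
      funext i
      simpa using hcon i
    obtain ⟨i, hi⟩ := this
    have hz : LmapE n ε i (Jmap n z) = 0 := by simp [LmapE, hi, Bmap_J, Bmap_J']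
    rw [ContinuousMultilinearMap.map_coord_zero (P k) i hz, smul_zero]
  · intro habs
    exact absurd (Finset.mem_univ _) habs

end Series

section MainLemmas

variable {n : ℕ}

lemma mem_eball_of_nnnorm_lt {X : Type*} [NormedAddCommGroup X] {x : X} {r : ℝ≥0∞}
    (h : (‖x‖₊ : ℝ≥0∞) < r) : x ∈ EMetric.ball (0 : X) r := by
  show x ∈ Metric.eball 0 r
  rwa [Metric.mem_eball, edist_zero_right]

lemma nnnorm_lt_of_norm_lt {X : Type*} [NormedAddCommGroup X] {x : X} {r : ℝ≥0}
    (h : ‖x‖ < (r : ℝ)) : (‖x‖₊ : ℝ≥0∞) < (r : ℝ≥0∞) := by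
  rw [ENNReal.coe_lt_coe]
  exact_mod_cast h

/-- Every real analytic germ at `0` on `ℂⁿ` extends to a holomorphic function
of `(z, w)` with `h z = H (z, z̄)`. -/
theorem exists_complexification {h : CE n → ℂ} (hh : AnalyticAt ℝ h 0) :
    ∃ (H : CD n → ℂ) (ρ : ℝ), 0 < ρ ∧ AnalyticOnNhd ℂ H (Metric.ball (0 : CD n) ρ) ∧
      ∀ z : CE n, ‖z‖ < ρ → h z = H (Jmap n z) := by
  obtain ⟨P, hPat⟩ := hh
  obtain ⟨rP, hPb⟩ := hPat
  obtain ⟨r0, hr0pos, hr0lt⟩ : ∃ r0 : ℝ≥0, 0 < (r0 : ℝ≥0∞) ∧ (r0 : ℝ≥0∞) < rP := by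
    rcases ENNReal.lt_iff_exists_nnreal_btwn.1 hPb.r_pos with ⟨r0, h1, h2⟩
    exact ⟨r0, h1, h2⟩
  have hr0R : (0:ℝ) < (r0 : ℝ) := by
    have : (0 : ℝ≥0) < r0 := by exact_mod_cast hr0pos
    exact_mod_cast this
  obtain ⟨C, hCpos, hC⟩ := P.norm_mul_pow_le_of_lt_radius (lt_of_lt_of_le hr0lt hPb.r_le)
  set Q := Qser P with hQdef
  have hQnorm : ∀ k, ‖Q k‖ * ((r0/2 : ℝ≥0) : ℝ)^k ≤ C := by
    intro k
    have h1 : ‖Q k‖ * ((r0/2 : ℝ≥0) : ℝ)^k ≤ ((2:ℝ)^k * ‖P k‖) * ((r0/2 : ℝ≥0):ℝ)^k := by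
      have := Qk_norm_le P k
      gcongr
      exact this
    refine h1.trans ?_
    have h2 : ((2:ℝ)^k * ‖P k‖) * ((r0/2 : ℝ≥0):ℝ)^k = ‖P k‖ * (r0:ℝ)^k := by
      push_cast
      field_simp
      rw [div_pow]; field_simp
    rw [h2]
    exact hC k
  have hQrad : ((r0/2 : ℝ≥0) : ℝ≥0∞) ≤ Q.radius := Q.le_radius_of_bound C hQnorm
  have hhalfpos : (0:ℝ) < ((r0/2 : ℝ≥0) : ℝ) := by
    push_cast; linarith [hr0R]
  have hQradpos : 0 < Q.radius := by
    have hr0nn : (0:ℝ≥0) < r0 := by exact_mod_cast hr0pos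
    refine lt_of_lt_of_le ?_ hQrad
    exact_mod_cast div_pos hr0nn (by norm_num : (0:ℝ≥0) < 2)
  have hQball : HasFPowerSeriesOnBall Q.sum Q 0 Q.radius := Q.hasFPowerSeriesOnBall hQradpos
  refine ⟨Q.sum, ((r0/2 : ℝ≥0) : ℝ), hhalfpos, ?_, ?_⟩
  · intro ζ hζ
    apply hQball.analyticOnNhd
    rw [Metric.mem_ball, dist_zero_right] at hζ
    exact mem_eball_of_nnnorm_lt (lt_of_lt_of_le (nnnorm_lt_of_norm_lt hζ) hQrad)
  · intro z hz
    have hz1 : z ∈ EMetric.ball (0 : CE n) rP := by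
      apply mem_eball_of_nnnorm_lt
      refine lt_trans (nnnorm_lt_of_norm_lt ?_) hr0lt
      refine hz.trans_le ?_
      push_cast
      nlinarith [hr0R]
    have hsum := hPb.sum hz1
    rw [zero_add] at hsum
    rw [hsum]
    unfold FormalMultilinearSeries.sum
    exact tsum_congr fun k => (Qk_diagJ P k z).symm

/-- Identity principle: a holomorphic function near `0 ∈ ℂⁿ × ℂⁿ` vanishing on the
totally real diagonal `{(z, z̄)}` vanishes identically near `0`. -/
theorem vanish_of_vanish_diag {Φ : CD n → ℂ} (hΦ : AnalyticAt ℂ Φ 0)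
    (hdiag : ∀ᶠ z in nhds (0 : CE n), Φ (Jmap n z) = 0) :
    ∀ᶠ ζ in nhds (0 : CD n), Φ ζ = 0 := by
  obtain ⟨Q, hQat⟩ := hΦ
  obtain ⟨rQ, hQ⟩ := hQat
  obtain ⟨r0, hr0pos, hr0lt⟩ : ∃ r0 : ℝ≥0, 0 < (r0 : ℝ≥0∞) ∧ (r0 : ℝ≥0∞) < rQ := by
    rcases ENNReal.lt_iff_exists_nnreal_btwn.1 hQ.r_pos with ⟨r0, h1, h2⟩
    exact ⟨r0, h1, h2⟩
  -- the restricted series along `J`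
  set P' : FormalMultilinearSeries ℝ (CE n) ℂ := fun k =>
    ((Q k).restrictScalars ℝ).compContinuousLinearMap (fun _ => Jmap n) with hP'def
  have hP'apply : ∀ k (z : CE n), P' k (fun _ => z) = Q k (fun _ => Jmap n z) := by
    intro k z
    rfl
  have hJnorm : ‖Jmap n‖ ≤ 1 := by
    apply ContinuousLinearMap.opNorm_le_bound _ zero_le_one
    intro z
    rw [norm_Jmap, one_mul]
  obtain ⟨C, hCpos, hC⟩ := Q.norm_mul_pow_le_of_lt_radius (lt_of_lt_of_le hr0lt hQ.r_le)
  have hP'rad : (r0 : ℝ≥0∞) ≤ P'.radius := by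
    apply P'.le_radius_of_bound C
    intro k
    have h1 : ‖P' k‖ ≤ ‖Q k‖ := by
      refine (ContinuousMultilinearMap.norm_compContinuousLinearMap_le _ _).trans ?_
      rw [ContinuousMultilinearMap.norm_restrictScalars]
      have hprod : (∏ _l : Fin k, ‖(Jmap n)‖) ≤ 1 :=
        Finset.prod_le_one (fun _ _ => norm_nonneg _) (fun _ _ => hJnorm)
      calc ‖Q k‖ * ∏ _l : Fin k, ‖(Jmap n)‖ ≤ ‖Q k‖ * 1 :=
            mul_le_mul_of_nonneg_left hprod (norm_nonneg _)
        _ = ‖Q k‖ := mul_one _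
    calc ‖P' k‖ * (r0:ℝ)^k ≤ ‖Q k‖ * (r0:ℝ)^k := by gcongr
      _ ≤ C := hC k
  have hφball : HasFPowerSeriesOnBall (fun z => Φ (Jmap n z)) P' 0 r0 := by
    refine ⟨hP'rad, hr0pos, ?_⟩
    intro y hy
    have hyn : (‖y‖₊ : ℝ≥0∞) < (r0 : ℝ≥0∞) := by
      rwa [EMetric.mem_ball, edist_zero_right] at hy
    have hJy : Jmap n y ∈ EMetric.ball (0 : CD n) rQ := by
      apply mem_eball_of_nnnorm_lt
      refine lt_trans ?_ hr0lt
      have : ‖Jmap n y‖₊ = ‖y‖₊ := by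
        ext
        exact norm_Jmap y
      rw [this]
      exact hyn
    have := hQ.hasSum hJy
    rw [zero_add] at this
    simp only [zero_add]
    exact this
  have hzero : HasFPowerSeriesAt (0 : CE n → ℂ) P' 0 := by
    refine HasFPowerSeriesAt.congr ⟨r0, hφball⟩ ?_
    exact hdiag
  have hPdiag : ∀ k (z : CE n), Q k (fun _ => Jmap n z) = 0 := by
    intro k z
    rw [← hP'apply]
    exact hzero.apply_eq_zero k z
  -- now kill the diagonal terms entirely
  have hQdiag : ∀ k (v : CD n), Q k (fun _ => v) = 0 := by
    intro k v
    set α := Amap n v with hα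
    set β := Bmap n v with hβ
    have hv : Jmap n α + I • Jmap n β = v := decompD v
    set F : ℂ → ℂ := fun t => Q k (fun _ => Jmap n α + t • Jmap n β) with hF
    have hFanalytic : AnalyticOnNhd ℂ F Set.univ := by
      intro t _
      refine AnalyticAt.comp ?_ ?_
      · exact (Q k).analyticAt
      · refine AnalyticAt.pi fun _ => ?_
        exact analyticAt_const.add
          ((ContinuousLinearMap.smulRight (ContinuousLinearMap.id ℂ ℂ) (Jmap n β)).analyticAt t)
    have hFreal : ∀ s : ℝ, F (s : ℂ) = 0 := by
      intro s
      have : Jmap n α + (s : ℂ) • Jmap n β = Jmap n (α + s • β) := by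
        rw [map_add, map_smul, Complex.coe_smul]
      rw [hF]
      simp only []
      rw [this]
      exact hPdiag k (α + s • β)
    have hfreq : ∃ᶠ t in nhdsWithin (0:ℂ) {(0:ℂ)}ᶜ, F t = 0 := by
      have htend : Filter.Tendsto (fun s : ℝ => (s : ℂ)) (nhdsWithin (0:ℝ) {(0:ℝ)}ᶜ)
          (nhdsWithin (0:ℂ) {(0:ℂ)}ᶜ) := by
        rw [tendsto_nhdsWithin_iff]
        constructor
        · have h0 : Filter.Tendsto (fun s : ℝ => (s : ℂ)) (nhds (0:ℝ)) (nhds (0:ℂ)) := by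
            have := Complex.continuous_ofReal.tendsto (0:ℝ)
            simpa using this
          exact h0.mono_left nhdsWithin_le_nhds
        · filter_upwards [self_mem_nhdsWithin] with s hs
          simp only [Set.mem_compl_iff, Set.mem_singleton_iff] at hs ⊢
          exact_mod_cast hs
      exact htend.frequently (Filter.Eventually.frequently (Filter.Eventually.of_forall hFreal))
    have hFzero : Set.EqOn F 0 Set.univ :=
      hFanalytic.eqOn_zero_of_preconnected_of_frequently_eq_zero isPreconnected_univ
        (Set.mem_univ 0) hfreq
    have := hFzero (Set.mem_univ I)
    rw [hF] at this
    simp only [Pi.zero_apply] at this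
    rw [← hv]
    exact this
  filter_upwards [EMetric.ball_mem_nhds (0 : CD n) hQ.r_pos] with ζ hζ
  have := hQ.sum hζ
  rw [zero_add] at this
  rw [this]
  unfold FormalMultilinearSeries.sum
  rw [tsum_congr fun k => hQdiag k ζ]
  exact tsum_zero

end MainLemmas

section ConstancyDbar

variable {n : ℕ}

lemma conjPi_single (k : Fin n) : conjPi n (Pi.single k (1:ℂ)) = Pi.single k 1 := by
  funext j
  by_cases hj : j = k
  · subst hj; simp
  · simp [Pi.single_eq_of_ne hj]

lemma conjPi_smulI_single (k : Fin n) :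
    conjPi n (I • (Pi.single k 1 : CE n)) = -(I • (Pi.single k 1 : CE n)) := by
  funext j
  by_cases hj : j = k
  · subst hj; simp
  · simp [Pi.single_eq_of_ne hj]

lemma Pmap_single_lt {p : ℕ} (k : Fin n) (hk : (k : ℕ) < p) :
    Pmap n p (Pi.single k (1:ℂ)) = 0 := by
  funext j
  rw [Pmap_apply]
  split
  · rfl
  · rename_i hj
    rw [Pi.single_eq_of_ne (by rintro rfl; exact hj hk) _]
    rfl

lemma Pmap_single_ge {p : ℕ} (k : Fin n) (hk : ¬ (k : ℕ) < p) :
    Pmap n p (Pi.single k (1:ℂ)) = Pi.single k 1 := by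
  funext j
  rw [Pmap_apply]
  split
  · rename_i hj
    rw [Pi.single_eq_of_ne (by rintro rfl; exact hk hj) _]
  · rfl

/-- `z ↦ (z, π z̄)`. -/
def Lmap (n p : ℕ) : CE n →L[ℝ] CD n :=
  (ContinuousLinearMap.id ℝ (CE n)).prod (((Pmap n p).restrictScalars ℝ).comp (conjPi n))

lemma Lmap_apply (p : ℕ) (z : CE n) : Lmap n p z = (z, Pmap n p (conjPi n z)) := rfl

lemma norm_Lmap_le (p : ℕ) (z : CE n) : ‖Lmap n p z‖ ≤ ‖z‖ := by
  rw [Lmap_apply, Prod.norm_def]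
  apply max_le le_rfl
  exact (norm_Pmap_le _ _).trans (norm_conjPi z).le

/-- If all `w`-partials in directions below `p` vanish on a ball, the function does not
depend on the first `p` coordinates of `w` there. -/
theorem const_along_w {G : CD n → ℂ} {ρ : ℝ} {p : ℕ}
    (hG : ∀ ζ ∈ Metric.ball (0 : CD n) ρ, DifferentiableAt ℂ G ζ)
    (hker : ∀ ζ ∈ Metric.ball (0 : CD n) ρ, ∀ k : Fin n, (k : ℕ) < p →
      fderiv ℂ G ζ ((0 : CE n), Pi.single k 1) = 0) :
    ∀ z w : CE n, ((z, w) : CD n) ∈ Metric.ball (0 : CD n) ρ →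
      G (z, Pmap n p w) = G (z, w) := by
  intro z w hzw
  set d : CE n := Pmap n p w - w with hd
  have hdir : ∀ ζ ∈ Metric.ball (0 : CD n) ρ, fderiv ℂ G ζ ((0 : CE n), d) = 0 := by
    intro ζ hζ
    have hsum : (((0 : CE n), d) : CD n) = ∑ k : Fin n, d k • (((0 : CE n), Pi.single k (1:ℂ)) : CD n) := by
      refine Prod.ext ?_ ?_
      · rw [Prod.fst_sum]
        simp
      · rw [Prod.snd_sum]
        simp only [Prod.smul_snd]
        funext j
        rw [Finset.sum_apply]
        simp [Pi.single_apply]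
    rw [hsum, map_sum]
    refine Finset.sum_eq_zero fun k _ => ?_
    rw [map_smul]
    by_cases hk : (k : ℕ) < p
    · rw [hker ζ hζ k hk, smul_zero]
    · have hdk : d k = 0 := by
        rw [hd]
        simp [Pmap_apply, hk]
      rw [hdk, zero_smul]
  set c : ℝ → CD n := fun t => (z, w + t • d) with hc
  have hc0 : c 0 = (z, w) := by simp [hc]
  have hc1 : c 1 = (z, Pmap n p w) := by simp [hc, hd]
  set s : Set ℝ := c ⁻¹' (Metric.ball (0 : CD n) ρ) with hs
  have hso : IsOpen s := by
    apply IsOpen.preimage ?_ Metric.isOpen_ball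
    exact continuous_const.prodMk (continuous_const.add (continuous_id.smul continuous_const))
  have hcaff : c = fun t => AffineMap.lineMap ((z, w) : CD n) ((z, w + d) : CD n) t := by
    funext t
    rw [AffineMap.lineMap_apply]
    refine Prod.ext ?_ ?_ <;> simp [hc] <;> module
  have hconv : Convex ℝ s := by
    rw [hs, hcaff]
    exact (convex_ball (0 : CD n) ρ).affine_preimage (AffineMap.lineMap _ _)
  have hmem0 : (0:ℝ) ∈ s := by
    rw [hs, Set.mem_preimage, hc0]; exact hzw
  have hmem1 : (1:ℝ) ∈ s := by
    rw [hs, Set.mem_preimage, hc1]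
    rw [Metric.mem_ball, dist_zero_right] at hzw ⊢
    refine lt_of_le_of_lt ?_ hzw
    rw [Prod.norm_def, Prod.norm_def]
    exact max_le_max le_rfl (norm_Pmap_le p w)
  have hder : ∀ t ∈ s, HasDerivAt (fun t => G (c t)) 0 t := by
    intro t ht
    have hct : c t ∈ Metric.ball (0 : CD n) ρ := ht
    have h2 : HasDerivAt (fun t : ℝ => w + t • d) d t := by
      simpa using ((hasDerivAt_id t).smul_const d).const_add w
    have h1 : HasDerivAt c (((0 : CE n), d) : CD n) t :=
      (hasDerivAt_const t z).prodMk h2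
    have h3 := ((hG _ hct).hasFDerivAt.restrictScalars ℝ).comp_hasDerivAt t h1
    have h4 : ((fderiv ℂ G (c t)).restrictScalars ℝ) (((0 : CE n), d) : CD n) = 0 :=
      hdir _ hct
    rw [h4] at h3
    exact h3
  have hdiff : DifferentiableOn ℝ (fun t => G (c t)) s :=
    fun t ht => ((hder t ht).differentiableAt).differentiableWithinAt
  have hfz : ∀ t ∈ s, fderivWithin ℝ (fun t => G (c t)) s t = 0 := by
    intro t ht
    rw [fderivWithin_of_isOpen hso ht]
    have h5 := (hder t ht).hasFDerivAt.fderiv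
    rw [h5]
    ext u
    simp
  have hconst := hconv.is_const_of_fderivWithin_eq_zero hdiff hfz hmem1 hmem0
  rw [hc1, hc0] at hconst
  exact hconst

theorem dbarj_congr {f g : CE n → ℂ} {z : CE n} (h : f =ᶠ[nhds z] g) (k : Fin n) :
    dbarj k f z = dbarj k g z := by
  unfold dbarj
  rw [h.fderiv_eq]

theorem dbar_of_comp_J {H : CD n → ℂ} {z : CE n} (hH : DifferentiableAt ℂ H (Jmap n z))
    (k : Fin n) :
    dbarj k (fun w => H (Jmap n w)) z = fderiv ℂ H (Jmap n z) ((0 : CE n), Pi.single k 1) := by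
  have h1 : HasFDerivAt (fun w => H (Jmap n w))
      (((fderiv ℂ H (Jmap n z)).restrictScalars ℝ).comp (Jmap n)) z :=
    (hH.hasFDerivAt.restrictScalars ℝ).comp z (Jmap n).hasFDerivAt
  unfold dbarj
  rw [h1.fderiv]
  set D := fderiv ℂ H (Jmap n z) with hD
  have hJ1 : Jmap n (Pi.single k (1:ℂ)) = ((Pi.single k 1, Pi.single k 1) : CD n) :=
    Prod.ext rfl (conjPi_single k)
  have hJ2 : Jmap n (I • (Pi.single k 1 : CE n)) =
      ((I • (Pi.single k 1 : CE n), -(I • (Pi.single k 1 : CE n))) : CD n) :=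
    Prod.ext rfl (conjPi_smulI_single k)
  have e1 : (((D.restrictScalars ℝ).comp (Jmap n)) (Pi.single k (1:ℂ))) =
      D ((Pi.single k 1, Pi.single k 1) : CD n) := by
    rw [ContinuousLinearMap.comp_apply, hJ1]; rfl
  have e2 : (((D.restrictScalars ℝ).comp (Jmap n)) (I • (Pi.single k 1 : CE n))) =
      D ((I • (Pi.single k 1 : CE n), -(I • (Pi.single k 1 : CE n))) : CD n) := by
    rw [ContinuousLinearMap.comp_apply, hJ2]; rfl
  rw [e1, e2]
  have hsplit1 : ((Pi.single k (1:ℂ), Pi.single k (1:ℂ)) : CD n)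
      = ((Pi.single k 1, 0) : CD n) + ((0, Pi.single k 1) : CD n) := by
    refine Prod.ext ?_ ?_ <;> simp
  have hsplit2 : ((I • (Pi.single k 1 : CE n), -(I • (Pi.single k 1 : CE n))) : CD n)
      = I • ((Pi.single k 1, 0) : CD n) + (-I) • ((0, Pi.single k 1) : CD n) := by
    refine Prod.ext ?_ ?_ <;> simp
  rw [hsplit1, hsplit2, map_add, map_add, map_smul, map_smul]
  set x := D ((Pi.single k 1, 0) : CD n)
  set y := D ((0, Pi.single k 1) : CD n)
  simp only [smul_eq_mul]
  linear_combination ((x - y)/2) * Complex.I_sq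

theorem dbar_of_comp_Lp {p : ℕ} {H : CD n → ℂ} {z : CE n}
    (hH : DifferentiableAt ℂ H (Lmap n p z))
    (k : Fin n) (hk : (k : ℕ) < p) :
    dbarj k (fun w => H (Lmap n p w)) z = 0 := by
  have h1 : HasFDerivAt (fun w => H (Lmap n p w))
      (((fderiv ℂ H (Lmap n p z)).restrictScalars ℝ).comp (Lmap n p)) z :=
    (hH.hasFDerivAt.restrictScalars ℝ).comp z (Lmap n p).hasFDerivAt
  unfold dbarj
  rw [h1.fderiv]
  set D := fderiv ℂ H (Lmap n p z) with hD
  have hL1 : Lmap n p (Pi.single k (1:ℂ)) = ((Pi.single k 1, 0) : CD n) := by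
    refine Prod.ext rfl ?_
    show Pmap n p (conjPi n (Pi.single k 1)) = 0
    rw [conjPi_single, Pmap_single_lt k hk]
  have hL2 : Lmap n p (I • (Pi.single k 1 : CE n)) = ((I • (Pi.single k 1 : CE n), 0) : CD n) := by
    refine Prod.ext rfl ?_
    show Pmap n p (conjPi n (I • (Pi.single k 1 : CE n))) = 0
    rw [conjPi_smulI_single, map_neg, map_smul, Pmap_single_lt k hk]
    simp
  have e1 : (((D.restrictScalars ℝ).comp (Lmap n p)) (Pi.single k (1:ℂ))) =
      D ((Pi.single k 1, 0) : CD n) := by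
    rw [ContinuousLinearMap.comp_apply, hL1]; rfl
  have e2 : (((D.restrictScalars ℝ).comp (Lmap n p)) (I • (Pi.single k 1 : CE n))) =
      D ((I • (Pi.single k 1 : CE n), 0) : CD n) := by
    rw [ContinuousLinearMap.comp_apply, hL2]; rfl
  rw [e1, e2]
  have hsplit : ((I • (Pi.single k 1 : CE n), (0:CE n)) : CD n)
      = I • ((Pi.single k 1, 0) : CD n) := by
    refine Prod.ext rfl ?_; simp
  rw [hsplit, map_smul]
  set x := D ((Pi.single k 1, 0) : CD n)
  simp only [smul_eq_mul]
  linear_combination (x/2) * Complex.I_sq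

end ConstancyDbar

end AuxStmt15

/-- Let `A` be a `q × q` matrix of real analytic functions on a polydisc in `ℂⁿ`, and let
`f₁, …, f_q` be real analytic `ℂʳ`-valued functions, holomorphic in `z₁, …, z_p`,
satisfying `∂̄_{p+1} fᵢ = ∑ⱼ Aᵢⱼ fⱼ`.  Then on a possibly smaller polydisc there is a
matrix `A'` of real analytic functions (obtained by setting `z̄₁ = ⋯ = z̄_p = 0` in the
power series of `A`) which is holomorphic in `z₁, …, z_p` and still satisfies
`∂̄_{p+1} fᵢ = ∑ⱼ A'ᵢⱼ fⱼ`. -/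
theorem stmt15 {n q r p : ℕ} (hp : p < n) (η : ℝ) (hη : 0 < η)
    (A : (Fin n → ℂ) → Matrix (Fin q) (Fin q) ℂ)
    (hA : ∀ i j, AnalyticOnNhd ℝ (fun z => A z i j) (polydisc n η))
    (f : Fin q → (Fin n → ℂ) → Fin r → ℂ)
    (hf : ∀ i c, AnalyticOnNhd ℝ (fun z => f i z c) (polydisc n η))
    (hhol : ∀ i c, ∀ z ∈ polydisc n η, ∀ j : Fin n, (j : ℕ) < p →
      dbarj j (fun w => f i w c) z = 0)
    (hrel : ∀ i c, ∀ z ∈ polydisc n η,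
      dbarj (⟨p, hp⟩ : Fin n) (fun w => f i w c) z = ∑ j, A z i j * f j z c) :
    ∃ η' : ℝ, 0 < η' ∧ η' ≤ η ∧
      ∃ A' : (Fin n → ℂ) → Matrix (Fin q) (Fin q) ℂ,
        (∀ i j, AnalyticOnNhd ℝ (fun z => A' z i j) (polydisc n η')) ∧
        (∀ i j, ∀ z ∈ polydisc n η', ∀ k : Fin n, (k : ℕ) < p →
          dbarj k (fun w => A' w i j) z = 0) ∧
        (∀ i c, ∀ z ∈ polydisc n η',
          dbarj (⟨p, hp⟩ : Fin n) (fun w => f i w c) z = ∑ j, A' z i j * f j z c) := by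
  classical
  have h0 : (0 : Fin n → ℂ) ∈ polydisc n η := fun j => by simpa using hη
  have hmempoly : ∀ {η' : ℝ} {z : Fin n → ℂ}, ‖z‖ < η' → z ∈ polydisc n η' :=
    fun {η'} {z} hz j => lt_of_le_of_lt (norm_le_pi_norm z j) hz
  have hpolymem : ∀ {η' : ℝ}, 0 < η' → ∀ {z : Fin n → ℂ}, z ∈ polydisc n η' → ‖z‖ < η' :=
    fun {η'} hη' {z} hz => (pi_norm_lt_iff hη').2 hz
  have hevlt : ∀ {ρ : ℝ}, 0 < ρ → ∀ᶠ z in nhds (0 : CE n), ‖z‖ < ρ := by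
    intro ρ hρ
    filter_upwards [Metric.ball_mem_nhds (0 : CE n) hρ] with z hz
    rwa [Metric.mem_ball, dist_zero_right] at hz
  have hmb : ∀ {ρ : ℝ} {z : CE n}, ‖z‖ < ρ → z ∈ Metric.ball (0 : CE n) ρ := by
    intro ρ z hz; rwa [Metric.mem_ball, dist_zero_right]
  have hmbD : ∀ {ρ : ℝ} {ζ : CD n}, ‖ζ‖ < ρ → ζ ∈ Metric.ball (0 : CD n) ρ := by
    intro ρ ζ hz; rwa [Metric.mem_ball, dist_zero_right]
  -- complexifications
  choose HA ρA hρA hHA hAeq using fun ij : Fin q × Fin q =>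
    exists_complexification (hA ij.1 ij.2 0 h0)
  choose Hf ρf hρf hHf hfeq using fun ic : Fin q × Fin r =>
    exists_complexification (hf ic.1 ic.2 0 h0)
  -- (2) dbar formula for f
  have hdbarf : ∀ (ic : Fin q × Fin r) (k : Fin n) (z : CE n), ‖z‖ < ρf ic →
      dbarj k (fun w => f ic.1 w ic.2) z =
        fderiv ℂ (Hf ic) (Jmap n z) ((0 : CE n), Pi.single k 1) := by
    intro ic k z hz
    have hEq : (fun w => f ic.1 w ic.2) =ᶠ[nhds z] (fun w => Hf ic (Jmap n w)) := by
      refine Filter.eventuallyEq_of_mem (Metric.isOpen_ball.mem_nhds (hmb hz)) ?_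
      intro w hw
      exact hfeq ic w (by rwa [Metric.mem_ball, dist_zero_right] at hw)
    rw [dbarj_congr hEq k]
    apply dbar_of_comp_J
    refine ((hHf ic) _ ?_).differentiableAt
    rw [Metric.mem_ball, dist_zero_right, norm_Jmap]
    exact hz
  -- (3) the `w_k`-derivatives of `Hf` vanish identically near `0`, for `k < p`
  have hpsi : ∀ (ic : Fin q × Fin r) (k : Fin n), (k : ℕ) < p →
      ∀ᶠ ζ in nhds (0 : CD n),
        fderiv ℂ (Hf ic) ζ ((0 : CE n), Pi.single k 1) = 0 := by
    intro ic k hk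
    apply vanish_of_vanish_diag
    · exact ((ContinuousLinearMap.apply ℂ ℂ (((0 : CE n), Pi.single k 1) : CD n)).analyticAt
        _).comp ((hHf ic).fderiv 0 (Metric.mem_ball_self (hρf ic)))
    · filter_upwards [hevlt (hρf ic), hevlt hη] with z hz1 hz2
      rw [← hdbarf ic k z hz1]
      exact hhol ic.1 ic.2 z (hmempoly hz2) k hk
  -- (4)+(6) : Hf and Hg agree on `(z, π z̄)` and `(z, z̄)` near zero
  have hstep : ∀ ic : Fin q × Fin r, ∀ᶠ z in nhds (0 : CE n),
      Hf ic (Lmap n p z) = f ic.1 z ic.2 ∧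
      fderiv ℂ (Hf ic) (Lmap n p z) ((0 : CE n), Pi.single (⟨p, hp⟩ : Fin n) 1) =
        fderiv ℂ (Hf ic) (Jmap n z) ((0 : CE n), Pi.single (⟨p, hp⟩ : Fin n) 1) := by
    intro ic
    have hall : ∀ᶠ ζ in nhds (0 : CD n), ∀ k : Fin n, (k : ℕ) < p →
        fderiv ℂ (Hf ic) ζ ((0 : CE n), Pi.single k 1) = 0 := by
      rw [eventually_all]
      intro k
      by_cases hk : (k : ℕ) < p
      · exact (hpsi ic k hk).mono fun ζ h _ => h
      · exact Filter.Eventually.of_forall fun ζ h => absurd h hk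
    obtain ⟨ρ₂, hρ₂pos, hρ₂⟩ := Metric.eventually_nhds_iff_ball.1 hall
    set ρ₃ := min ρ₂ (ρf ic) with hρ₃def
    have hρ₃pos : 0 < ρ₃ := lt_min hρ₂pos (hρf ic)
    have hsub2 : Metric.ball (0 : CD n) ρ₃ ⊆ Metric.ball (0 : CD n) ρ₂ :=
      Metric.ball_subset_ball (min_le_left _ _)
    have hsubf : Metric.ball (0 : CD n) ρ₃ ⊆ Metric.ball (0 : CD n) (ρf ic) :=
      Metric.ball_subset_ball (min_le_right _ _)
    have hcw := const_along_w (G := Hf ic) (ρ := ρ₃) (p := p)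
      (fun ζ hζ => ((hHf ic) ζ (hsubf hζ)).differentiableAt)
      (fun ζ hζ k hk => hρ₂ ζ (hsub2 hζ) k hk)
    -- the `M` map
    set M : CD n →L[ℂ] CD n :=
      (ContinuousLinearMap.fst ℂ (CE n) (CE n)).prod
        ((Pmap n p).comp (ContinuousLinearMap.snd ℂ (CE n) (CE n))) with hMdef
    have hMapply : ∀ ζ : CD n, M ζ = (ζ.1, Pmap n p ζ.2) := fun ζ => rfl
    have hMnorm : ∀ ζ : CD n, ‖M ζ‖ ≤ ‖ζ‖ := by
      intro ζ
      rw [hMapply, Prod.norm_def, Prod.norm_def]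
      exact max_le_max le_rfl (norm_Pmap_le _ _)
    have hgM : ∀ ζ ∈ Metric.ball (0 : CD n) ρ₃,
        fderiv ℂ (Hf ic) ζ ((0 : CE n), Pi.single (⟨p, hp⟩ : Fin n) 1) =
          fderiv ℂ (Hf ic) (M ζ) ((0 : CE n), Pi.single (⟨p, hp⟩ : Fin n) 1) := by
      intro ζ hζ
      have hMζ : M ζ ∈ Metric.ball (0 : CD n) ρ₃ := by
        rw [Metric.mem_ball, dist_zero_right] at hζ ⊢
        exact lt_of_le_of_lt (hMnorm ζ) hζ
      have hMeq : (fun ξ => Hf ic (M ξ)) =ᶠ[nhds ζ] Hf ic := by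
        refine Filter.eventuallyEq_of_mem (Metric.isOpen_ball.mem_nhds hζ) ?_
        intro ξ hξ
        show Hf ic (M ξ) = Hf ic ξ
        rw [hMapply]
        exact hcw ξ.1 ξ.2 hξ
      have hchain : fderiv ℂ (fun ξ => Hf ic (M ξ)) ζ =
          (fderiv ℂ (Hf ic) (M ζ)).comp M := by
        exact (((hHf ic) _ (hsubf hMζ)).differentiableAt.hasFDerivAt.comp ζ
          M.hasFDerivAt).fderiv
      have := hMeq.fderiv_eq (𝕜 := ℂ)
      rw [hchain] at this
      rw [← this, ContinuousLinearMap.comp_apply]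
      congr 1
      rw [hMapply]
      refine Prod.ext rfl ?_
      show Pmap n p (Pi.single (⟨p, hp⟩ : Fin n) 1) = Pi.single (⟨p, hp⟩ : Fin n) 1
      exact Pmap_single_ge _ (by simp)
    filter_upwards [hevlt hρ₃pos] with z hz
    have hJz : Jmap n z ∈ Metric.ball (0 : CD n) ρ₃ := by
      rw [Metric.mem_ball, dist_zero_right, norm_Jmap]; exact hz
    constructor
    · have h1 : Hf ic (z, Pmap n p (conjPi n z)) = Hf ic (z, conjPi n z) :=
        hcw z (conjPi n z) hJz
      have h2 : f ic.1 z ic.2 = Hf ic (Jmap n z) :=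
        hfeq ic z (lt_of_lt_of_le hz (min_le_right _ _))
      rw [Lmap_apply, h1, h2]
      rfl
    · exact (hgM (Jmap n z) hJz).symm
  -- (7) Φ vanishes identically near zero
  have hPhi : ∀ (i : Fin q) (c : Fin r), ∀ᶠ ζ in nhds (0 : CD n),
      fderiv ℂ (Hf (i, c)) ζ ((0 : CE n), Pi.single (⟨p, hp⟩ : Fin n) 1) -
        ∑ j, HA (i, j) ζ * Hf (j, c) ζ = 0 := by
    intro i c
    apply vanish_of_vanish_diag
    · refine AnalyticAt.sub ?_ ?_
      · exact ((ContinuousLinearMap.apply ℂ ℂ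
          (((0 : CE n), Pi.single (⟨p, hp⟩ : Fin n) 1) : CD n)).analyticAt _).comp
          ((hHf (i, c)).fderiv 0 (Metric.mem_ball_self (hρf (i, c))))
      · refine Finset.analyticAt_fun_sum _ fun j _ => ?_
        exact ((hHA (i, j)) 0 (Metric.mem_ball_self (hρA (i, j)))).mul
          ((hHf (j, c)) 0 (Metric.mem_ball_self (hρf (j, c))))
    · have h1 : ∀ᶠ z in nhds (0 : CE n), ∀ j : Fin q, A z i j = HA (i, j) (Jmap n z) := by
        rw [eventually_all]
        intro j
        filter_upwards [hevlt (hρA (i, j))] with z hz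
        exact hAeq (i, j) z hz
      have h2 : ∀ᶠ z in nhds (0 : CE n), ∀ j : Fin q, f j z c = Hf (j, c) (Jmap n z) := by
        rw [eventually_all]
        intro j
        filter_upwards [hevlt (hρf (j, c))] with z hz
        exact hfeq (j, c) z hz
      filter_upwards [h1, h2, hevlt (hρf (i, c)), hevlt hη] with z hz1 hz2 hz3 hz4
      have hg := hdbarf (i, c) (⟨p, hp⟩ : Fin n) z hz3
      rw [← hg, hrel i c z (hmempoly hz4)]
      rw [Finset.sum_congr rfl fun j _ => by rw [hz1 j, hz2 j]]
      exact sub_self _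
  -- (8) the relation with `A'`
  have hfinal : ∀ (i : Fin q) (c : Fin r), ∀ᶠ z in nhds (0 : CE n),
      dbarj (⟨p, hp⟩ : Fin n) (fun w => f i w c) z =
        ∑ j, HA (i, j) (Lmap n p z) * f j z c := by
    intro i c
    obtain ⟨ρ₄, hρ₄pos, hρ₄⟩ := Metric.eventually_nhds_iff_ball.1 (hPhi i c)
    have h5 : ∀ᶠ z in nhds (0 : CE n), ∀ j : Fin q,
        Hf (j, c) (Lmap n p z) = f j z c := by
      rw [eventually_all]
      intro j
      exact (hstep (j, c)).mono fun z hz => hz.1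
    filter_upwards [hevlt hρ₄pos, hevlt (hρf (i, c)), hstep (i, c), h5]
      with z hz4 hzf hzs h5z
    have hLz : Lmap n p z ∈ Metric.ball (0 : CD n) ρ₄ :=
      hmbD (lt_of_le_of_lt (norm_Lmap_le p z) hz4)
    have hPz := hρ₄ _ hLz
    rw [hdbarf (i, c) (⟨p, hp⟩ : Fin n) z hzf, ← hzs.2, sub_eq_zero.1 hPz]
    exact Finset.sum_congr rfl fun j _ => by rw [h5z j]
  -- (9) analyticity and holomorphy of `A'`
  have hana : ∀ᶠ z in nhds (0 : CE n), ∀ ij : Fin q × Fin q,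
      AnalyticAt ℝ (fun w => HA ij (Lmap n p w)) z ∧
        DifferentiableAt ℂ (HA ij) (Lmap n p z) := by
    rw [eventually_all]
    intro ij
    filter_upwards [hevlt (hρA ij)] with z hz
    have hmem : Lmap n p z ∈ Metric.ball (0 : CD n) (ρA ij) :=
      hmbD (lt_of_le_of_lt (norm_Lmap_le p z) hz)
    constructor
    · exact (((hHA ij) _ hmem).restrictScalars).comp ((Lmap n p).analyticAt z)
    · exact ((hHA ij) _ hmem).differentiableAt
  -- collect everything
  have hrel' : ∀ᶠ z in nhds (0 : CE n), ∀ ic : Fin q × Fin r,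
      dbarj (⟨p, hp⟩ : Fin n) (fun w => f ic.1 w ic.2) z =
        ∑ j, HA (ic.1, j) (Lmap n p z) * f j z ic.2 := by
    rw [eventually_all]
    intro ic
    exact hfinal ic.1 ic.2
  obtain ⟨ε, hεpos, hball⟩ := Metric.eventually_nhds_iff_ball.1 (hana.and hrel')
  refine ⟨min η ε, lt_min hη hεpos, min_le_left _ _,
    fun z => Matrix.of fun i j => HA (i, j) (Lmap n p z), ?_, ?_, ?_⟩
  · intro i j z hz
    have hz' : ‖z‖ < ε := lt_of_lt_of_le (hpolymem (lt_min hη hεpos) hz) (min_le_right _ _)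
    exact ((hball z (hmb hz')).1 (i, j)).1
  · intro i j z hz k hk
    have hz' : ‖z‖ < ε := lt_of_lt_of_le (hpolymem (lt_min hη hεpos) hz) (min_le_right _ _)
    exact dbar_of_comp_Lp ((hball z (hmb hz')).1 (i, j)).2 k hk
  · intro i c z hz
    have hz' : ‖z‖ < ε := lt_of_lt_of_le (hpolymem (lt_min hη hεpos) hz) (min_le_right _ _)
    exact (hball z (hmb hz')).2 (i, c)
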